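/- Let G and K be groups. Isomorphism classes of extensions of G by K are in bijection with isomorphism classes of monoidal functors from the discrete monoidal category G (objects the elements of G, only identity morphisms, tensor product given by multiplication in G) to the 2-group BiTors(K) of K-bitorsors. The bijection sends an extension ∂ : E → G to the functor g ↦ ∂⁻¹(g). -/

import Mathlib

namespace BraidedExt

universe u

open CategoryTheory

/-- A bitorsor over a group `K`: a nonempty set with commuting left and right `K`-actions,
each of which is free and transitive. -/
structure Bitorsor (K : Type u) [Group K] : Type (u + 1) where
  carrier : Type u
  nonempty : Nonempty carrier
  act : K → carrier → carrier
  ract : carrier → K → carrier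
  one_act : ∀ x, act 1 x = x
  mul_act : ∀ k k' x, act (k * k') x = act k (act k' x)
  ract_one : ∀ x, ract x 1 = x
  ract_mul : ∀ x k k', ract x (k * k') = ract (ract x k) k'
  act_ract : ∀ k x k', act k (ract x k') = ract (act k x) k'
  left_free_trans : ∀ x y, ∃! k, act k x = y
  right_free_trans : ∀ x y, ∃! k, ract x k = y

variable {K : Type u} [Group K]

/-- A morphism of `K`-bitorsors: a bijection equivariant for both actions. -/
structure BtHom (X Y : Bitorsor K) : Type u where
  toFun : X.carrier → Y.carrier
  bij : Function.Bijective toFun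
  map_act : ∀ k x, toFun (X.act k x) = Y.act k (toFun x)
  map_ract : ∀ x k, toFun (X.ract x k) = Y.ract (toFun x) k

theorem BtHom.ext' {X Y : Bitorsor K} {f g : BtHom X Y}
    (h : ∀ x, f.toFun x = g.toFun x) : f = g := by
  have h' : f.toFun = g.toFun := funext h
  cases f; cases g; cases h'; rfl

/-- Any map equivariant for the two actions between bitorsors is automatically
bijective. -/
theorem bijective_of_equivariant {X Y : Bitorsor K} (f : X.carrier → Y.carrier)
    (hf : ∀ k x, f (X.act k x) = Y.act k (f x)) : Function.Bijective f := by
  obtain ⟨x₀⟩ := X.nonempty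
  constructor
  · intro a b hab
    obtain ⟨k, hk, -⟩ := X.left_free_trans x₀ a
    obtain ⟨k', hk', -⟩ := X.left_free_trans x₀ b
    subst hk hk'
    rw [hf, hf] at hab
    rw [(Y.left_free_trans (f x₀) (Y.act k (f x₀))).unique rfl hab.symm]
  · intro y
    obtain ⟨k, hk, -⟩ := Y.left_free_trans (f x₀) y
    exact ⟨X.act k x₀, by rw [hf, hk]⟩

/-- Build a bitorsor morphism from an equivariant map. -/
def mkHom {X Y : Bitorsor K} (f : X.carrier → Y.carrier)
    (hact : ∀ k x, f (X.act k x) = Y.act k (f x))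
    (hract : ∀ x k, f (X.ract x k) = Y.ract (f x) k) : BtHom X Y :=
  ⟨f, bijective_of_equivariant f hact, hact, hract⟩

instance : Category (Bitorsor K) where
  Hom := BtHom
  id X := mkHom id (fun _ _ => rfl) (fun _ _ => rfl)
  comp f g := mkHom (g.toFun ∘ f.toFun)
    (fun k x => by simp [f.map_act, g.map_act])
    (fun x k => by simp [f.map_ract, g.map_ract])
  id_comp f := BtHom.ext' fun x => rfl
  comp_id f := BtHom.ext' fun x => rfl
  assoc f g h := BtHom.ext' fun x => rfl

@[ext]
theorem BtHom.hom_ext {X Y : Bitorsor K} {f g : X ⟶ Y}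
    (h : ∀ x, f.toFun x = g.toFun x) : f = g := BtHom.ext' h

/-- The inverse of a bitorsor morphism. -/
noncomputable def BtHom.inv {X Y : Bitorsor K} (f : BtHom X Y) : BtHom Y X where
  toFun := (Equiv.ofBijective f.toFun f.bij).symm
  bij := (Equiv.ofBijective f.toFun f.bij).symm.bijective
  map_act := fun k y => by
    have h1 : ∀ z, f.toFun ((Equiv.ofBijective f.toFun f.bij).symm z) = z := fun z =>
      (Equiv.ofBijective f.toFun f.bij).apply_symm_apply z
    apply f.bij.injective
    rw [f.map_act, h1, h1]
  map_ract := fun y k => by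
    have h1 : ∀ z, f.toFun ((Equiv.ofBijective f.toFun f.bij).symm z) = z := fun z =>
      (Equiv.ofBijective f.toFun f.bij).apply_symm_apply z
    apply f.bij.injective
    rw [f.map_ract, h1, h1]

/-- Every bitorsor morphism is an isomorphism. -/
noncomputable def BtHom.toIso {X Y : Bitorsor K} (f : BtHom X Y) : X ≅ Y where
  hom := f
  inv := f.inv
  hom_inv_id := BtHom.ext' fun x => (Equiv.ofBijective f.toFun f.bij).symm_apply_apply x
  inv_hom_id := BtHom.ext' fun y => (Equiv.ofBijective f.toFun f.bij).apply_symm_apply y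

/-- The relation `(x ◁ k, y) ∼ (x, k ▷ y)` defining the contracted product `X ×_K Y`. -/
def ctrRel (X Y : Bitorsor K) : X.carrier × Y.carrier → X.carrier × Y.carrier → Prop :=
  fun p q => ∃ k : K, p.1 = X.ract q.1 k ∧ q.2 = Y.act k p.2

theorem ctrRel_equivalence (X Y : Bitorsor K) : Equivalence (ctrRel X Y) where
  refl p := ⟨1, by rw [X.ract_one], by rw [Y.one_act]⟩
  symm := by
    rintro p q ⟨k, h1, h2⟩
    refine ⟨k⁻¹, ?_, ?_⟩
    · rw [h1, ← X.ract_mul, mul_inv_cancel, X.ract_one]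
    · rw [h2, ← Y.mul_act, inv_mul_cancel, Y.one_act]
  trans := by
    rintro p q r ⟨k, h1, h2⟩ ⟨l, h3, h4⟩
    refine ⟨l * k, ?_, ?_⟩
    · rw [h1, h3, ← X.ract_mul]
    · rw [h4, h2, ← Y.mul_act]

/-- The setoid underlying the contracted product. -/
def ctrSetoid (X Y : Bitorsor K) : Setoid (X.carrier × Y.carrier) :=
  ⟨ctrRel X Y, ctrRel_equivalence X Y⟩

theorem ctr_fst_inj {X Y : Bitorsor K} {x x' : X.carrier} {y : Y.carrier}
    (h : Quotient.mk (ctrSetoid X Y) (x, y) = Quotient.mk (ctrSetoid X Y) (x', y)) :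
    x = x' := by
  obtain ⟨d, h1, h2⟩ := Quotient.exact h
  have hd : d = 1 := (Y.left_free_trans y y).unique h2.symm (Y.one_act y)
  rw [hd, X.ract_one] at h1
  exact h1

theorem ctr_snd_inj {X Y : Bitorsor K} {x : X.carrier} {y y' : Y.carrier}
    (h : Quotient.mk (ctrSetoid X Y) (x, y) = Quotient.mk (ctrSetoid X Y) (x, y')) :
    y = y' := by
  obtain ⟨d, h1, h2⟩ := Quotient.exact h
  have hd : d = 1 := (X.right_free_trans x x).unique h1.symm (X.ract_one x)
  rw [hd, Y.one_act] at h2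
  exact h2.symm

/-- The contracted product `X ×_K Y` of two bitorsors. -/
def ctrBt (X Y : Bitorsor K) : Bitorsor K where
  carrier := Quotient (ctrSetoid X Y)
  nonempty := by
    obtain ⟨x⟩ := X.nonempty; obtain ⟨y⟩ := Y.nonempty
    exact ⟨Quotient.mk _ (x, y)⟩
  act := fun k => Quotient.map (fun p => (X.act k p.1, p.2))
    (by rintro p q ⟨c, h1, h2⟩
        exact ⟨c, show X.act k p.1 = X.ract (X.act k q.1) c by rw [h1, X.act_ract], h2⟩)
  ract := fun P k => Quotient.map (fun p => (p.1, Y.ract p.2 k))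
    (by rintro p q ⟨c, h1, h2⟩
        exact ⟨c, h1, show Y.ract q.2 k = Y.act c (Y.ract p.2 k) by rw [h2, Y.act_ract]⟩) P
  one_act := by
    rintro ⟨p⟩
    exact congrArg (Quotient.mk _) (show (X.act 1 p.1, p.2) = p by rw [X.one_act])
  mul_act := by
    rintro k k' ⟨p⟩
    exact congrArg (Quotient.mk _)
      (show (X.act (k * k') p.1, p.2) = (X.act k (X.act k' p.1), p.2) by rw [X.mul_act])
  ract_one := by
    rintro ⟨p⟩
    exact congrArg (Quotient.mk _) (show (p.1, Y.ract p.2 1) = p by rw [Y.ract_one])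
  ract_mul := by
    rintro ⟨p⟩ k k'
    exact congrArg (Quotient.mk _)
      (show (p.1, Y.ract p.2 (k * k')) = (p.1, Y.ract (Y.ract p.2 k) k') by rw [Y.ract_mul])
  act_ract := by
    rintro k ⟨p⟩ k'
    rfl
  left_free_trans := by
    rintro ⟨p⟩ ⟨q⟩
    obtain ⟨c, hc, -⟩ := Y.left_free_trans p.2 q.2
    have hq : Quotient.mk (ctrSetoid X Y) q = Quotient.mk (ctrSetoid X Y) (X.ract q.1 c, p.2) :=
      (Quotient.sound (⟨c, rfl, hc.symm⟩ : ctrRel X Y (X.ract q.1 c, p.2) q)).symm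
    obtain ⟨k, hk, hku⟩ := X.left_free_trans p.1 (X.ract q.1 c)
    refine ⟨k, ?_, ?_⟩
    · have : Quotient.mk (ctrSetoid X Y) (X.act k p.1, p.2)
          = Quotient.mk (ctrSetoid X Y) q := by
        rw [hq]
        exact congrArg (Quotient.mk _)
          (show (X.act k p.1, p.2) = (X.ract q.1 c, p.2) by rw [hk])
      exact this
    · rintro k' hk'
      refine hku k' ?_
      refine ctr_fst_inj (x := X.act k' p.1) (x' := X.ract q.1 c) (y := p.2) ?_
      rw [← hq]
      exact hk'
  right_free_trans := by
    rintro ⟨p⟩ ⟨q⟩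
    obtain ⟨c, hc, -⟩ := X.right_free_trans q.1 p.1
    have hq : Quotient.mk (ctrSetoid X Y) q
        = Quotient.mk (ctrSetoid X Y) (p.1, Y.act c⁻¹ q.2) := by
      refine (Quotient.sound (?_ : ctrRel X Y (p.1, Y.act c⁻¹ q.2) q)).symm
      refine ⟨c, hc.symm, ?_⟩
      show q.2 = Y.act c (Y.act c⁻¹ q.2)
      rw [← Y.mul_act, mul_inv_cancel, Y.one_act]
    obtain ⟨k, hk, hku⟩ := Y.right_free_trans p.2 (Y.act c⁻¹ q.2)
    refine ⟨k, ?_, ?_⟩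
    · have : Quotient.mk (ctrSetoid X Y) (p.1, Y.ract p.2 k)
          = Quotient.mk (ctrSetoid X Y) q := by
        rw [hq]
        exact congrArg (Quotient.mk _)
          (show (p.1, Y.ract p.2 k) = (p.1, Y.act c⁻¹ q.2) by rw [hk])
      exact this
    · rintro k' hk'
      refine hku k' ?_
      refine ctr_snd_inj (x := p.1) (y := Y.ract p.2 k') (y' := Y.act c⁻¹ q.2) ?_
      rw [← hq]
      exact hk'

/-- The trivial bitorsor: `K` acting on itself on both sides. -/
@[reducible] def unitBt : Bitorsor K where
  carrier := K
  nonempty := ⟨1⟩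
  act := (· * ·)
  ract := (· * ·)
  one_act := one_mul
  mul_act := fun k k' x => mul_assoc k k' x
  ract_one := mul_one
  ract_mul := fun x k k' => (mul_assoc x k k').symm
  act_ract := fun k x k' => (mul_assoc k x k').symm
  left_free_trans := fun x y =>
    ⟨y * x⁻¹, by group, fun k hk => by rw [← hk]; group⟩
  right_free_trans := fun x y =>
    ⟨x⁻¹ * y, by group, fun k hk => by rw [← hk]; group⟩

/-- The associator for the contracted product. -/
def assocHom (X Y Z : Bitorsor K) : BtHom (ctrBt (ctrBt X Y) Z) (ctrBt X (ctrBt Y Z)) :=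
  mkHom
    (Quotient.lift
      (fun p : (ctrBt X Y).carrier × Z.carrier =>
        Quotient.lift
          (fun q : X.carrier × Y.carrier =>
            Quotient.mk (ctrSetoid X (ctrBt Y Z))
              (q.1, Quotient.mk (ctrSetoid Y Z) (q.2, p.2)))
          (by rintro q q' ⟨c, h1, h2⟩
              refine Quotient.sound (⟨c, h1, ?_⟩ : ctrRel X (ctrBt Y Z) _ _)
              show Quotient.mk (ctrSetoid Y Z) (q'.2, p.2)
                  = Quotient.mk (ctrSetoid Y Z) (Y.act c q.2, p.2)
              exact congrArg (Quotient.mk _)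
                (show (q'.2, p.2) = (Y.act c q.2, p.2) by rw [h2]))
          p.1)
      (by rintro ⟨P, z⟩ ⟨P', z'⟩ ⟨c, h1, h2⟩
          obtain ⟨q⟩ := P
          obtain ⟨q'⟩ := P'
          obtain ⟨d, hd1, hd2⟩ := Quotient.exact
            (h1.trans (rfl : (ctrBt X Y).ract (Quotient.mk (ctrSetoid X Y) q') c
              = Quotient.mk (ctrSetoid X Y) (q'.1, Y.ract q'.2 c)))
          refine Quotient.sound (⟨d, hd1, ?_⟩ : ctrRel X (ctrBt Y Z)
            (q.1, Quotient.mk (ctrSetoid Y Z) (q.2, z))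
            (q'.1, Quotient.mk (ctrSetoid Y Z) (q'.2, z')))
          show Quotient.mk (ctrSetoid Y Z) (q'.2, z')
              = Quotient.mk (ctrSetoid Y Z) (Y.act d q.2, z)
          rw [← hd2]
          exact (Quotient.sound (⟨c, rfl, h2⟩ : ctrRel Y Z (Y.ract q'.2 c, z) (q'.2, z'))).symm))
    (by rintro k ⟨⟨P, z⟩⟩
        obtain ⟨q⟩ := P
        rfl)
    (by rintro ⟨⟨P, z⟩⟩ k
        obtain ⟨q⟩ := P
        rfl)

/-- The inverse associator for the contracted product. -/
def assocInvHom (X Y Z : Bitorsor K) : BtHom (ctrBt X (ctrBt Y Z)) (ctrBt (ctrBt X Y) Z) :=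
  mkHom
    (Quotient.lift
      (fun p : X.carrier × (ctrBt Y Z).carrier =>
        Quotient.lift
          (fun q : Y.carrier × Z.carrier =>
            Quotient.mk (ctrSetoid (ctrBt X Y) Z)
              (Quotient.mk (ctrSetoid X Y) (p.1, q.1), q.2))
          (by rintro q q' ⟨c, h1, h2⟩
              refine Quotient.sound (⟨c, ?_, h2⟩ : ctrRel (ctrBt X Y) Z _ _)
              show Quotient.mk (ctrSetoid X Y) (p.1, q.1)
                  = Quotient.mk (ctrSetoid X Y) (p.1, Y.ract q'.1 c)
              exact congrArg (Quotient.mk _)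
                (show (p.1, q.1) = (p.1, Y.ract q'.1 c) by rw [h1]))
          p.2)
      (by rintro ⟨x, P⟩ ⟨x', P'⟩ ⟨c, h1, h2⟩
          obtain ⟨q⟩ := P
          obtain ⟨q'⟩ := P'
          obtain ⟨d, hd1, hd2⟩ := (Quotient.exact
            (h2.trans (rfl : (ctrBt Y Z).act c (Quotient.mk (ctrSetoid Y Z) q)
              = Quotient.mk (ctrSetoid Y Z) (Y.act c q.1, q.2))) :
            ctrRel Y Z q' (Y.act c q.1, q.2))
          refine Quotient.sound (⟨d⁻¹, ?_, ?_⟩ : ctrRel (ctrBt X Y) Z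
            (Quotient.mk (ctrSetoid X Y) (x, q.1), q.2)
            (Quotient.mk (ctrSetoid X Y) (x', q'.1), q'.2))
          · have hq : Y.ract q'.1 d⁻¹ = Y.act c q.1 := by
              rw [hd1, ← Y.ract_mul, mul_inv_cancel, Y.ract_one]
            show Quotient.mk (ctrSetoid X Y) (x, q.1)
                = Quotient.mk (ctrSetoid X Y) (x', Y.ract q'.1 d⁻¹)
            rw [hq]
            exact Quotient.sound (⟨c, h1, rfl⟩ : ctrRel X Y (x, q.1) (x', Y.act c q.1))
          · show q'.2 = Z.act d⁻¹ q.2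
            rw [hd2, ← Z.mul_act, inv_mul_cancel, Z.one_act]))
    (by rintro k ⟨⟨x, P⟩⟩
        obtain ⟨q⟩ := P
        rfl)
    (by rintro ⟨⟨x, P⟩⟩ k
        obtain ⟨q⟩ := P
        rfl)

/-- The left unitor for the contracted product. -/
def lUnitHom (X : Bitorsor K) : BtHom (ctrBt unitBt X) X :=
  mkHom
    (Quotient.lift (fun p : K × X.carrier => X.act p.1 p.2)
      (by rintro p q ⟨c, h1, h2⟩
          show X.act p.1 p.2 = X.act q.1 q.2
          rw [h2, h1]
          show X.act (q.1 * c) p.2 = X.act q.1 (X.act c p.2)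
          rw [X.mul_act]))
    (by rintro k ⟨p⟩
        show X.act (k * p.1) p.2 = X.act k (X.act p.1 p.2)
        rw [X.mul_act])
    (by rintro ⟨p⟩ k
        show X.act p.1 (X.ract p.2 k) = X.ract (X.act p.1 p.2) k
        exact X.act_ract _ _ _)

/-- The inverse of the left unitor. -/
def lUnitInvHom (X : Bitorsor K) : BtHom X (ctrBt unitBt X) :=
  mkHom (fun x => Quotient.mk (ctrSetoid unitBt X) (1, x))
    (by intro k x
        show Quotient.mk (ctrSetoid unitBt X) (1, X.act k x)
            = Quotient.mk (ctrSetoid unitBt X) (k * 1, x)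
        refine Quotient.sound (⟨k⁻¹, ?_, ?_⟩ : ctrRel unitBt X (1, X.act k x) (k * 1, x))
        · show (1 : K) = (k * 1) * k⁻¹
          group
        · show x = X.act k⁻¹ (X.act k x)
          rw [← X.mul_act, inv_mul_cancel, X.one_act])
    (by intro x k
        rfl)

/-- The right unitor for the contracted product. -/
def rUnitHom (X : Bitorsor K) : BtHom (ctrBt X unitBt) X :=
  mkHom
    (Quotient.lift (fun p : X.carrier × K => X.ract p.1 p.2)
      (by rintro p q ⟨c, h1, h2⟩
          show X.ract p.1 p.2 = X.ract q.1 q.2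
          rw [h1, h2]
          show X.ract (X.ract q.1 c) p.2 = X.ract q.1 (c * p.2)
          rw [X.ract_mul]))
    (by rintro k ⟨p⟩
        show X.ract (X.act k p.1) p.2 = X.act k (X.ract p.1 p.2)
        exact (X.act_ract _ _ _).symm)
    (by rintro ⟨p⟩ k
        show X.ract p.1 (p.2 * k) = X.ract (X.ract p.1 p.2) k
        rw [X.ract_mul])

/-- The inverse of the right unitor. -/
def rUnitInvHom (X : Bitorsor K) : BtHom X (ctrBt X unitBt) :=
  mkHom (fun x => Quotient.mk (ctrSetoid X unitBt) (x, 1))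
    (by intro k x
        rfl)
    (by intro x k
        show Quotient.mk (ctrSetoid X unitBt) (X.ract x k, 1)
            = Quotient.mk (ctrSetoid X unitBt) (x, 1 * k)
        refine Quotient.sound (⟨k, rfl, ?_⟩ : ctrRel X unitBt (X.ract x k, 1) (x, 1 * k))
        show (1 * k : K) = k * 1
        group)

instance : MonoidalCategory (Bitorsor K) where
  tensorObj := ctrBt
  tensorUnit := unitBt
  whiskerLeft := fun X {Y Z} f => mkHom
    (Quotient.map (fun p => (p.1, f.toFun p.2))
      (by rintro p q ⟨c, h1, h2⟩
          exact ⟨c, h1, show f.toFun q.2 = Z.act c (f.toFun p.2) by rw [h2, f.map_act]⟩))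
    (by rintro k ⟨p⟩; rfl)
    (by rintro ⟨p⟩ k
        exact congrArg (Quotient.mk _)
          (show (p.1, f.toFun (Y.ract p.2 k)) = (p.1, Z.ract (f.toFun p.2) k) by
            rw [f.map_ract]))
  whiskerRight := fun {X Y} f Z => mkHom
    (Quotient.map (fun p => (f.toFun p.1, p.2))
      (by rintro p q ⟨c, h1, h2⟩
          exact ⟨c, show f.toFun p.1 = Y.ract (f.toFun q.1) c by rw [h1, f.map_ract], h2⟩))
    (by rintro k ⟨p⟩
        exact congrArg (Quotient.mk _)
          (show (f.toFun (X.act k p.1), p.2) = (Y.act k (f.toFun p.1), p.2) by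
            rw [f.map_act]))
    (by rintro ⟨p⟩ k; rfl)
  associator X Y Z :=
    ⟨assocHom X Y Z, assocInvHom X Y Z,
      BtHom.ext' (by rintro ⟨⟨P, z⟩⟩; obtain ⟨q⟩ := P; rfl),
      BtHom.ext' (by rintro ⟨⟨x, P⟩⟩; obtain ⟨q⟩ := P; rfl)⟩
  leftUnitor X :=
    ⟨lUnitHom X, lUnitInvHom X,
      BtHom.ext' (by
        rintro ⟨p⟩
        refine (Quotient.sound (⟨p.1⁻¹, ?_, ?_⟩ :
          ctrRel unitBt X (1, X.act p.1 p.2) p)).trans ?_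
        · show (1 : K) = p.1 * p.1⁻¹
          group
        · show p.2 = X.act p.1⁻¹ (X.act p.1 p.2)
          rw [← X.mul_act, inv_mul_cancel, X.one_act]
        · rfl),
      BtHom.ext' (fun x => X.one_act x)⟩
  rightUnitor X :=
    ⟨rUnitHom X, rUnitInvHom X,
      BtHom.ext' (by
        rintro ⟨p⟩
        refine (Quotient.sound (⟨p.2, rfl, ?_⟩ :
          ctrRel X unitBt (X.ract p.1 p.2, 1) p)).trans ?_
        · show p.2 = p.2 * 1
          group
        · rfl),
      BtHom.ext' (fun x => X.ract_one x)⟩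
  tensorHom_def := by intros; rfl
  id_tensorHom_id := by
    intro X Y
    apply BtHom.ext'
    rintro ⟨p⟩
    rfl
  tensorHom_comp_tensorHom := by
    intros
    apply BtHom.ext'
    rintro ⟨p⟩
    rfl
  whiskerLeft_id := by
    intro X Y
    apply BtHom.ext'
    rintro ⟨p⟩
    rfl
  id_whiskerRight := by
    intro X Y
    apply BtHom.ext'
    rintro ⟨p⟩
    rfl
  associator_naturality := by
    intro X₁ X₂ X₃ Y₁ Y₂ Y₃ f₁ f₂ f₃
    apply BtHom.ext'
    rintro ⟨⟨P, z⟩⟩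
    obtain ⟨q⟩ := P
    rfl
  leftUnitor_naturality := by
    intro X Y f
    apply BtHom.ext'
    rintro ⟨p⟩
    exact (f.map_act p.1 p.2).symm
  rightUnitor_naturality := by
    intro X Y f
    apply BtHom.ext'
    rintro ⟨p⟩
    exact (f.map_ract p.1 p.2).symm
  pentagon := by
    intro W X Y Z
    apply BtHom.ext'
    rintro ⟨⟨P, z⟩⟩
    obtain ⟨⟨Q, y⟩⟩ := P
    obtain ⟨q⟩ := Q
    rfl
  triangle := by
    intro X Y
    apply BtHom.ext'
    rintro ⟨⟨P, y⟩⟩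
    obtain ⟨p⟩ := P
    exact (Quotient.sound (⟨p.2, rfl, rfl⟩ :
      ctrRel X Y (X.ract p.1 p.2, y) (p.1, Y.act p.2 y))).symm

/-- An extension of a group `G` by a group `K`: a group `E` with a surjection `π : E → G`
and an identification of `K` with the kernel of `π`. -/
structure GroupExtension (G K : Type u) [Group G] [Group K] : Type (u + 1) where
  E : Type u
  [grp : Group E]
  π : E →* G
  surj : Function.Surjective π
  ι : K →* E
  inj : Function.Injective ι
  ker_eq : ∀ e : E, π e = 1 ↔ e ∈ Set.range ι

attribute [instance] GroupExtension.grp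

variable {G : Type u} [Group G]

/-- Isomorphism of extensions: a group isomorphism commuting with the projections to `G`
and restricting to the identity on `K`. -/
def extRel (e₁ e₂ : GroupExtension G K) : Prop :=
  ∃ f : e₁.E ≃* e₂.E, (∀ x, e₂.π (f x) = e₁.π x) ∧ ∀ k, f (e₁.ι k) = e₂.ι k

/-- The fiber of an extension over `g ∈ G`, as a `K`-bitorsor. -/
def fibBt (e : GroupExtension G K) (g : G) : Bitorsor K where
  carrier := { x : e.E // e.π x = g }
  nonempty := by
    obtain ⟨x, hx⟩ := e.surj g
    exact ⟨⟨x, hx⟩⟩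
  act k x := ⟨e.ι k * x.1, by
    rw [map_mul, (e.ker_eq _).mpr ⟨k, rfl⟩, x.2, one_mul]⟩
  ract x k := ⟨x.1 * e.ι k, by
    rw [map_mul, (e.ker_eq _).mpr ⟨k, rfl⟩, x.2, mul_one]⟩
  one_act x := Subtype.ext (by show e.ι 1 * x.1 = x.1; simp)
  mul_act k k' x := Subtype.ext (by
    show e.ι (k * k') * x.1 = e.ι k * (e.ι k' * x.1)
    simp [mul_assoc])
  ract_one x := Subtype.ext (by show x.1 * e.ι 1 = x.1; simp)
  ract_mul x k k' := Subtype.ext (by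
    show x.1 * e.ι (k * k') = (x.1 * e.ι k) * e.ι k'
    simp [mul_assoc])
  act_ract k x k' := Subtype.ext (by
    show e.ι k * (x.1 * e.ι k') = (e.ι k * x.1) * e.ι k'
    simp [mul_assoc])
  left_free_trans x y := by
    have h : e.π (y.1 * x.1⁻¹) = 1 := by rw [map_mul, map_inv, x.2, y.2, mul_inv_cancel]
    obtain ⟨k, hk⟩ := (e.ker_eq _).mp h
    refine ⟨k, Subtype.ext (by show e.ι k * x.1 = y.1; rw [hk]; group), ?_⟩
    intro k' hk'
    apply e.inj
    have h' : e.ι k' * x.1 = y.1 := congrArg Subtype.val hk'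
    rw [hk, ← h']
    group
  right_free_trans x y := by
    have h : e.π (x.1⁻¹ * y.1) = 1 := by rw [map_mul, map_inv, x.2, y.2, inv_mul_cancel]
    obtain ⟨k, hk⟩ := (e.ker_eq _).mp h
    refine ⟨k, Subtype.ext (by show x.1 * e.ι k = y.1; rw [hk]; group), ?_⟩
    intro k' hk'
    apply e.inj
    have h' : x.1 * e.ι k' = y.1 := congrArg Subtype.val hk'
    rw [hk, ← h']
    group

/-- The fiber functor of an extension: `g ↦ ∂⁻¹(g)`. -/
def fibF (e : GroupExtension G K) : Discrete G ⥤ Bitorsor K where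
  obj g := fibBt e g.as
  map {a b} f := mkHom (fun x => ⟨x.1, (Discrete.eq_of_hom f) ▸ x.2⟩)
    (fun k x => Subtype.ext rfl) (fun x k => Subtype.ext rfl)
  map_id := by
    intro a
    exact BtHom.ext' fun x => rfl
  map_comp := by
    intro a b c f g
    exact BtHom.ext' fun x => rfl

/-- The monoidal structure on the fiber functor, given by multiplication. -/
noncomputable def fibCore (e : GroupExtension G K) : (fibF e).CoreMonoidal where
  εIso := BtHom.toIso <| mkHom (X := unitBt) (Y := fibBt e (1 : G))
    (fun (k : K) => (⟨e.ι k, (e.ker_eq _).mpr ⟨k, rfl⟩⟩ : (fibBt e (1 : G)).carrier))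
    (fun k k' => Subtype.ext (map_mul e.ι k k'))
    (fun k k' => Subtype.ext (map_mul e.ι k k'))
  μIso a b := BtHom.toIso <| mkHom
    (X := ctrBt (fibBt e a.as) (fibBt e b.as)) (Y := fibBt e (a.as * b.as))
    (Quotient.lift (fun p : (fibBt e a.as).carrier × (fibBt e b.as).carrier =>
        (⟨p.1.1 * p.2.1, by rw [map_mul, p.1.2, p.2.2]⟩ : (fibBt e (a.as * b.as)).carrier))
      (by rintro p q ⟨c, h1, h2⟩
          have h1' : p.1.1 = q.1.1 * e.ι c := congrArg Subtype.val h1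
          have h2' : q.2.1 = e.ι c * p.2.1 := congrArg Subtype.val h2
          apply Subtype.ext
          show p.1.1 * p.2.1 = q.1.1 * q.2.1
          rw [h1', h2', mul_assoc]))
    (by rintro k ⟨p⟩
        exact Subtype.ext (mul_assoc _ _ _))
    (by rintro ⟨p⟩ k
        exact Subtype.ext (mul_assoc _ _ _).symm)
  μIso_hom_natural_left := by
    rintro a a' f b
    apply BtHom.ext'
    rintro ⟨p⟩
    rfl
  μIso_hom_natural_right := by
    rintro a a' b f
    apply BtHom.ext'
    rintro ⟨p⟩
    rfl
  associativity := by
    intro a b c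
    apply BtHom.ext'
    rintro ⟨⟨P, z⟩⟩
    obtain ⟨q⟩ := P
    exact Subtype.ext (mul_assoc _ _ _)
  left_unitality := by
    intro a
    apply BtHom.ext'
    rintro ⟨p⟩
    rfl
  right_unitality := by
    intro a
    apply BtHom.ext'
    rintro ⟨p⟩
    rfl

/-- A bundled monoidal functor from the discrete monoidal category `G` to the 2-group of
`K`-bitorsors. -/
structure MonFunctor (G K : Type u) [Group G] [Group K] : Type (u + 1) where
  F : Discrete G ⥤ Bitorsor K
  mon : F.Monoidal

/-- Monoidal natural isomorphism of bundled monoidal functors. -/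
def monRel (F₁ F₂ : MonFunctor G K) : Prop :=
  ∃ i : F₁.F ≅ F₂.F,
    letI : F₁.F.LaxMonoidal := F₁.mon.toLaxMonoidal
    letI : F₂.F.LaxMonoidal := F₂.mon.toLaxMonoidal
    NatTrans.IsMonoidal i.hom

/-- The bundled monoidal fiber functor of an extension. -/
noncomputable def fiberMonFunctor (e : GroupExtension G K) : MonFunctor G K :=
  ⟨fibF e, (fibCore e).toMonoidal⟩

/-! ### Auxiliary development for the proof -/

section Aux

open Functor.LaxMonoidal MonoidalCategory

variable (F : Discrete G ⥤ Bitorsor K) [F.LaxMonoidal]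

/-- Transport along an equality of group elements. -/
def tp {g h : G} (p : g = h) : (F.obj ⟨g⟩).carrier → (F.obj ⟨h⟩).carrier :=
  (F.map (eqToHom (by rw [p]))).toFun

theorem tp_refl {g : G} (p : g = g) (x : (F.obj ⟨g⟩).carrier) : tp F p x = x :=
  congrArg (fun φ : BtHom (F.obj ⟨g⟩) (F.obj ⟨g⟩) => φ.toFun x) (F.map_id ⟨g⟩)

theorem tp_tp {g h n : G} (p : g = h) (q : h = n) (x : (F.obj ⟨g⟩).carrier) :
    tp F q (tp F p x) = tp F (p.trans q) x := by
  subst p; subst q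
  simp only [tp_refl]

theorem map_hom_tp {a b : Discrete G} (f : a ⟶ b) (x : (F.obj a).carrier) :
    (F.map f).toFun x = tp F (Discrete.eq_of_hom f) x := by
  have hab : a = b := by
    obtain ⟨a⟩ := a; obtain ⟨b⟩ := b
    cases Discrete.eq_of_hom f
    rfl
  have : f = eqToHom hab := Subsingleton.elim _ _
  rw [this]; rfl

/-- The total space of a monoidal functor: the carrier of the extension. -/
def EC : Type u := (g : G) × (F.obj ⟨g⟩).carrier

theorem sigmaEq {g h : G} (p : g = h) (x : (F.obj ⟨g⟩).carrier) :
    (⟨g, x⟩ : EC F) = ⟨h, tp F p x⟩ := by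
  subst p; rw [tp_refl]

/-- Multiplication on the total space. -/
def mulE {g h : G} (x : (F.obj ⟨g⟩).carrier) (y : (F.obj ⟨h⟩).carrier) :
    (F.obj ⟨g * h⟩).carrier :=
  (μ F ⟨g⟩ ⟨h⟩).toFun (Quotient.mk (ctrSetoid (F.obj ⟨g⟩) (F.obj ⟨h⟩)) (x, y))

theorem assoc_pt {g h n : G} (x : (F.obj ⟨g⟩).carrier) (y : (F.obj ⟨h⟩).carrier)
    (z : (F.obj ⟨n⟩).carrier) :
    tp F (mul_assoc g h n) (mulE F (mulE F x y) z) = mulE F x (mulE F y z) :=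
  congrArg (fun φ : BtHom ((F.obj ⟨g⟩ ⊗ F.obj ⟨h⟩) ⊗ F.obj ⟨n⟩) (F.obj ⟨g * (h * n)⟩) =>
      φ.toFun (Quotient.mk _ (Quotient.mk _ (x, y), z)))
    (associativity (F := F) ⟨g⟩ ⟨h⟩ ⟨n⟩)

theorem lunit_pt {g : G} (k : K) (x : (F.obj ⟨g⟩).carrier) :
    tp F (one_mul g) (mulE F ((ε F).toFun k) x) = (F.obj ⟨g⟩).act k x :=
  (congrArg (fun φ : BtHom (unitBt ⊗ F.obj ⟨g⟩) (F.obj ⟨g⟩) =>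
      φ.toFun (Quotient.mk _ (k, x)))
    (left_unitality (F := F) ⟨g⟩)).symm

theorem runit_pt {g : G} (x : (F.obj ⟨g⟩).carrier) (k : K) :
    tp F (mul_one g) (mulE F x ((ε F).toFun k)) = (F.obj ⟨g⟩).ract x k :=
  (congrArg (fun φ : BtHom (F.obj ⟨g⟩ ⊗ unitBt) (F.obj ⟨g⟩) =>
      φ.toFun (Quotient.mk _ (x, k)))
    (right_unitality (F := F) ⟨g⟩)).symm

theorem mulE_surj_left {g h : G} (x : (F.obj ⟨h⟩).carrier)
    (tgt : (F.obj ⟨g * h⟩).carrier) :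
    ∃ y : (F.obj ⟨g⟩).carrier, mulE F y x = tgt :=
  (bijective_of_equivariant (fun y : (F.obj ⟨g⟩).carrier => mulE F y x)
    (fun k y => (μ F ⟨g⟩ ⟨h⟩).map_act k (Quotient.mk _ (y, x)))).2 tgt

/-- Choice of left quotient used to define inverses. -/
noncomputable def invAux {g h : G} (x : (F.obj ⟨h⟩).carrier)
    (tgt : (F.obj ⟨g * h⟩).carrier) : (F.obj ⟨g⟩).carrier :=
  Classical.choose (mulE_surj_left F x tgt)

theorem invAux_spec {g h : G} (x : (F.obj ⟨h⟩).carrier)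
    (tgt : (F.obj ⟨g * h⟩).carrier) : mulE F (invAux F x tgt) x = tgt :=
  Classical.choose_spec (mulE_surj_left F x tgt)

/-- The group structure on the total space of a monoidal functor. -/
noncomputable def extGroup : Group (EC F) where
  mul p q := ⟨p.1 * q.1, mulE F p.2 q.2⟩
  one := ⟨1, (ε F).toFun 1⟩
  inv p := ⟨p.1⁻¹, invAux F p.2 (tp F (inv_mul_cancel p.1).symm ((ε F).toFun 1))⟩
  mul_assoc := by
    rintro ⟨g, x⟩ ⟨h, y⟩ ⟨n, z⟩
    show (⟨g * h * n, mulE F (mulE F x y) z⟩ : EC F) = ⟨g * (h * n), mulE F x (mulE F y z)⟩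
    rw [sigmaEq F (mul_assoc g h n), assoc_pt]
  one_mul := by
    rintro ⟨g, x⟩
    show (⟨1 * g, mulE F ((ε F).toFun 1) x⟩ : EC F) = ⟨g, x⟩
    rw [sigmaEq F (one_mul g), lunit_pt, (F.obj ⟨g⟩).one_act]
  mul_one := by
    rintro ⟨g, x⟩
    show (⟨g * 1, mulE F x ((ε F).toFun 1)⟩ : EC F) = ⟨g, x⟩
    rw [sigmaEq F (mul_one g), runit_pt, (F.obj ⟨g⟩).ract_one]
  inv_mul_cancel := by
    rintro ⟨g, x⟩
    show (⟨g⁻¹ * g,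
        mulE F (invAux F x (tp F (inv_mul_cancel g).symm ((ε F).toFun 1))) x⟩ : EC F)
      = ⟨1, (ε F).toFun 1⟩
    rw [invAux_spec, sigmaEq F (inv_mul_cancel g), tp_tp, tp_refl]

/-- The extension associated to a monoidal functor. -/
noncomputable def toExt (M : MonFunctor G K) : GroupExtension G K :=
  letI := M.mon.toLaxMonoidal
  letI := extGroup M.F
  { E := EC M.F
    π := { toFun := fun p => p.1
           map_one' := rfl
           map_mul' := fun _ _ => rfl }
    surj := fun g => by
      obtain ⟨x⟩ := (M.F.obj ⟨g⟩).nonempty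
      exact ⟨⟨g, x⟩, rfl⟩
    ι := { toFun := fun k => ⟨1, (ε M.F).toFun k⟩
           map_one' := rfl
           map_mul' := fun k k' => by
             have h1 : (⟨1 * 1, mulE M.F ((ε M.F).toFun k) ((ε M.F).toFun k')⟩ : EC M.F)
                 = ⟨1, (M.F.obj ⟨1⟩).act k ((ε M.F).toFun k')⟩ := by
               rw [sigmaEq M.F (one_mul 1), lunit_pt]
             have h2 : (ε M.F).toFun (k * k')
                 = (M.F.obj ⟨1⟩).act k ((ε M.F).toFun k') := (ε M.F).map_act k k'
             exact (congrArg (fun t => (⟨1, t⟩ : EC M.F)) h2).trans h1.symm }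
    inj := fun k k' h => by
      have h2 : (ε M.F).toFun k = (ε M.F).toFun k' :=
        eq_of_heq (Sigma.mk.inj_iff.mp h).2
      exact (ε M.F).bij.1 h2
    ker_eq := by
      rintro ⟨g, x⟩
      constructor
      · intro hg
        have hg' : g = 1 := hg
        subst hg'
        obtain ⟨k, hk⟩ := (ε M.F).bij.2 x
        exact ⟨k, congrArg (fun t => (⟨1, t⟩ : EC M.F)) hk⟩
      · rintro ⟨k, hk⟩
        exact (congrArg Sigma.fst hk).symm }

end Aux

section RoundTrips

open Functor.LaxMonoidal MonoidalCategory

/-- Round trip on extensions: `toExt (fiberMonFunctor e)` is isomorphic to `e`. -/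
theorem roundA (e : GroupExtension G K) : extRel (toExt (fiberMonFunctor e)) e := by
  letI := (fiberMonFunctor e).mon.toLaxMonoidal
  refine ⟨{ toFun := fun p => p.2.1
            invFun := fun x => ⟨e.π x, ⟨x, rfl⟩⟩
            left_inv := by
              rintro ⟨g, x, hx⟩
              have hg : g = e.π x := hx.symm
              subst hg
              rfl
            right_inv := fun x => rfl
            map_mul' := fun p q => rfl }, fun x => ?_, fun k => rfl⟩
  obtain ⟨g, x, hx⟩ := x
  exact hx

/-- Round trip on monoidal functors: `fiberMonFunctor (toExt M)` is monoidally
isomorphic to `M`. -/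
theorem roundB (M : MonFunctor G K) : monRel (fiberMonFunctor (toExt M)) M := by
  letI := M.mon.toLaxMonoidal
  letI : (fibF (toExt M)).LaxMonoidal := (fiberMonFunctor (toExt M)).mon.toLaxMonoidal
  -- the comparison morphism from `M.F` to the fiber functor of `toExt M`
  let jv : ∀ a : Discrete G, BtHom (M.F.obj a) ((fibF (toExt M)).obj a) := fun a =>
    mkHom (fun x => ⟨⟨a.as, x⟩, rfl⟩)
      (fun k x => by
        refine Subtype.ext ?_
        show (⟨a.as, (M.F.obj a).act k x⟩ : EC M.F) = ⟨1 * a.as, mulE M.F ((ε M.F).toFun k) x⟩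
        rw [sigmaEq M.F (one_mul a.as), lunit_pt])
      (fun x k => by
        refine Subtype.ext ?_
        show (⟨a.as, (M.F.obj a).ract x k⟩ : EC M.F) = ⟨a.as * 1, mulE M.F x ((ε M.F).toFun k)⟩
        rw [sigmaEq M.F (mul_one a.as), runit_pt])
  let J : M.F ≅ fibF (toExt M) := NatIso.ofComponents (fun a => BtHom.toIso (jv a))
    (by
      intro a b f
      refine BtHom.ext' fun x => ?_
      refine Subtype.ext ?_
      show (⟨b.as, (M.F.map f).toFun x⟩ : EC M.F) = ⟨a.as, x⟩
      rw [map_hom_tp]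
      exact (sigmaEq M.F (Discrete.eq_of_hom f) x).symm)
  haveI hJ : NatTrans.IsMonoidal J.hom := by
    refine { unit := ?_, tensor := fun a b => ?_ }
    · exact BtHom.ext' fun k => Subtype.ext rfl
    · refine BtHom.ext' ?_
      rintro ⟨p⟩
      exact Subtype.ext rfl
  haveI hInv : NatTrans.IsMonoidal J.inv := inferInstance
  exact ⟨J.symm, hInv⟩

/-- `fiberMonFunctor` respects isomorphism of extensions. -/
theorem fiberMonFunctor_congr {e₁ e₂ : GroupExtension G K} (h : extRel e₁ e₂) :
    monRel (fiberMonFunctor e₁) (fiberMonFunctor e₂) := by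
  obtain ⟨f, hπ, hι⟩ := h
  letI := (fiberMonFunctor e₁).mon.toLaxMonoidal
  letI := (fiberMonFunctor e₂).mon.toLaxMonoidal
  let cv : ∀ g : G, BtHom (fibBt e₁ g) (fibBt e₂ g) := fun g =>
    mkHom (fun x => ⟨f x.1, by rw [hπ, x.2]⟩)
      (fun k x => Subtype.ext (by
        show f (e₁.ι k * x.1) = e₂.ι k * f x.1
        rw [map_mul, hι]))
      (fun x k => Subtype.ext (by
        show f (x.1 * e₁.ι k) = f x.1 * e₂.ι k
        rw [map_mul, hι]))
  refine ⟨NatIso.ofComponents (fun a => BtHom.toIso (cv a.as))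
    (fun f => BtHom.ext' fun x => Subtype.ext rfl), ?_⟩
  refine { unit := ?_, tensor := fun a b => ?_ }
  · exact BtHom.ext' fun k => Subtype.ext (hι k)
  · refine BtHom.ext' ?_
    rintro ⟨p⟩
    exact Subtype.ext (map_mul f _ _)

/-- `toExt` respects monoidal isomorphism. -/
theorem toExt_congr {M₁ M₂ : MonFunctor G K} (h : monRel M₁ M₂) :
    extRel (toExt M₁) (toExt M₂) := by
  obtain ⟨i, him⟩ := h
  letI := M₁.mon.toLaxMonoidal
  letI := M₂.mon.toLaxMonoidal
  refine ⟨{ toFun := fun p => ⟨p.1, (i.hom.app ⟨p.1⟩).toFun p.2⟩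
            invFun := fun p => ⟨p.1, (i.inv.app ⟨p.1⟩).toFun p.2⟩
            left_inv := by
              rintro ⟨g, x⟩
              exact congrArg (fun t => (⟨g, t⟩ : EC M₁.F))
                (congrArg (fun (τ : M₁.F ⟶ M₁.F) => (τ.app ⟨g⟩).toFun x) i.hom_inv_id)
            right_inv := by
              rintro ⟨g, x⟩
              exact congrArg (fun t => (⟨g, t⟩ : EC M₂.F))
                (congrArg (fun (τ : M₂.F ⟶ M₂.F) => (τ.app ⟨g⟩).toFun x) i.inv_hom_id)
            map_mul' := by
              rintro ⟨g, x⟩ ⟨h, y⟩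
              exact congrArg (fun t => (⟨g * h, t⟩ : EC M₂.F))
                (congrArg (fun φ : BtHom (M₁.F.obj ⟨g⟩ ⊗ M₁.F.obj ⟨h⟩) (M₂.F.obj ⟨g * h⟩) =>
                    φ.toFun (Quotient.mk _ (x, y)))
                  (him.tensor ⟨g⟩ ⟨h⟩)) },
    fun p => rfl, fun k => ?_⟩
  exact congrArg (fun t => (⟨1, t⟩ : EC M₂.F))
    (congrArg (fun φ : BtHom unitBt (M₂.F.obj ⟨1⟩) => φ.toFun k) him.unit)

end RoundTrips

/-- **Statement 6 (Grothendieck).** Isomorphism classes of extensions of `G` by `K` are in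
bijection with isomorphism classes of monoidal functors from the discrete monoidal
category `G` to the 2-group of `K`-bitorsors; the bijection sends an extension
`∂ : E → G` to the functor `g ↦ ∂⁻¹(g)`. -/
theorem extensions_equiv_monoidal_functors (G K : Type u) [Group G] [Group K] :
    ∃ e : Quot (extRel (G := G) (K := K)) ≃ Quot (monRel (G := G) (K := K)),
      ∀ ext : GroupExtension G K,
        e (Quot.mk _ ext) = Quot.mk _ (fiberMonFunctor ext) := by
  refine ⟨{ toFun := Quot.lift (fun e => Quot.mk _ (fiberMonFunctor e))
              (fun e₁ e₂ h => Quot.sound (fiberMonFunctor_congr h))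
            invFun := Quot.lift (fun M => Quot.mk _ (toExt M))
              (fun M₁ M₂ h => Quot.sound (toExt_congr h))
            left_inv := ?_
            right_inv := ?_ }, fun ext => rfl⟩
  · exact Quot.ind fun e => Quot.sound (roundA e)
  · exact Quot.ind fun M => Quot.sound (roundB M)

end BraidedExt
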